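/- Let R, δ > 0, Λ > 1, λ ∈ [Λ^{-1}, Λ], and let V ∈ LP satisfy Leb(σ(H_{λV}) ∩ [-R,R]) < δ. Then there exist τ > 0 and r > 0 such that Leb(σ(H_{λ'V'}) ∩ [-R,R]) < δ whenever λ' ∈ [Λ^{-1}, Λ] with |λ - λ'| < τ and V' ∈ LP with ‖V - V'‖_∞ < r. -/

import Mathlib

open MeasureTheory Filter Set BoundedContinuousFunction
open scoped ENNReal

noncomputable section
/-- The spectrum of the Schrödinger operator `H_V φ = -φ'' + Vφ` on `L²(ℝ)`, characterized
via Weyl sequences drawn from the core `C_c²(ℝ)` of the (essentially self-adjoint) operator: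
`E ∈ σ(H_V)` iff there are compactly supported `C²` functions `u` of unit `L²` norm with
`‖(H_V - E)u‖_{L²}` arbitrarily small. -/
def schrodingerSpectrum (V : ℝ → ℝ) : Set ℝ :=
  {E : ℝ | ∀ ε : ℝ, 0 < ε → ∃ u : ℝ → ℂ,
    ContDiff ℝ 2 u ∧ HasCompactSupport u ∧
    (∫ x : ℝ, ‖u x‖ ^ 2) = 1 ∧
    (∫ x : ℝ, ‖-deriv (deriv u) x + (V x : ℂ) * u x - (E : ℂ) * u x‖ ^ 2) < ε}
/-- The space of (uniformly) limit-periodic functions on `ℝ`: uniform limits of continuous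
periodic functions, viewed inside the bounded continuous functions with the sup norm. -/
def LP : Set (ℝ →ᵇ ℝ) :=
  closure {f : ℝ →ᵇ ℝ | ∃ T : ℝ, 0 < T ∧ Function.Periodic (⇑f) T}

namespace SmallSpecAux

/-- The residual of the Schrödinger eigen-equation. -/
def resid (W : ℝ → ℝ) (E : ℝ) (u : ℝ → ℂ) : ℝ → ℂ :=
  fun x => -deriv (deriv u) x + (W x : ℂ) * u x - (E : ℂ) * u x

/-- The L² "norm" functional on raw functions. -/
def J (f : ℝ → ℂ) : ℝ := Real.sqrt (∫ x : ℝ, ‖f x‖ ^ 2)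

lemma integral_sq_nonneg (f : ℝ → ℂ) : 0 ≤ ∫ x : ℝ, ‖f x‖ ^ 2 :=
  integral_nonneg fun x => by positivity

lemma J_nonneg (f : ℝ → ℂ) : 0 ≤ J f := Real.sqrt_nonneg _

lemma sq_J (f : ℝ → ℂ) : J f ^ 2 = ∫ x : ℝ, ‖f x‖ ^ 2 :=
  Real.sq_sqrt (integral_sq_nonneg f)

lemma eLpNorm_eq_J (f : ℝ → ℂ) (hc : Continuous f) (hs : HasCompactSupport f) :
    eLpNorm f 2 volume = ENNReal.ofReal (J f) := by
  rw [(hc.memLp_of_hasCompactSupport hs).eLpNorm_eq_integral_rpow_norm (by norm_num)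
    (by norm_num)]
  congr 1
  have h2 : ((2 : ℝ≥0∞)).toReal = (2 : ℝ) := by norm_num
  rw [h2, J, Real.sqrt_eq_rpow]
  norm_num

lemma J_add_le (f g : ℝ → ℂ) (hfc : Continuous f) (hfs : HasCompactSupport f)
    (hgc : Continuous g) (hgs : HasCompactSupport g) :
    J (fun x => f x + g x) ≤ J f + J g := by
  have hc : Continuous (fun x => f x + g x) := hfc.add hgc
  have hs : HasCompactSupport (fun x => f x + g x) := hfs.add hgs
  have h := eLpNorm_add_le (hfc.aestronglyMeasurable (μ := volume))
    (hgc.aestronglyMeasurable (μ := volume)) (by norm_num : (1:ℝ≥0∞) ≤ 2)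
  rw [show f + g = fun x => f x + g x from rfl] at h
  rw [eLpNorm_eq_J _ hc hs, eLpNorm_eq_J _ hfc hfs, eLpNorm_eq_J _ hgc hgs,
    ← ENNReal.ofReal_add (J_nonneg f) (J_nonneg g)] at h
  exact (ENNReal.ofReal_le_ofReal_iff (add_nonneg (J_nonneg f) (J_nonneg g))).mp h

/-- Bound on `J` of a real-scalar multiple of a unit vector. -/
lemma J_scaled_le (u : ℝ → ℂ) (huc : Continuous u) (hus : HasCompactSupport u)
    (hu1 : (∫ x : ℝ, ‖u x‖ ^ 2) = 1) (c : ℝ → ℝ) (M : ℝ) (hM : 0 ≤ M)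
    (hc : ∀ x, |c x| ≤ M) :
    J (fun x => (c x : ℂ) * u x) ≤ M := by
  have hmono : (∫ x : ℝ, ‖(c x : ℂ) * u x‖ ^ 2) ≤ ∫ x : ℝ, M ^ 2 * ‖u x‖ ^ 2 := by
    refine integral_mono_of_nonneg (Eventually.of_forall fun x => by positivity)
      (by
        have hcs : HasCompactSupport (fun x => ‖u x‖ ^ 2) :=
          hus.norm.comp_left (g := fun t : ℝ => t ^ 2) (by simp)
        have hc : Continuous (fun x => M ^ 2 * ‖u x‖ ^ 2) := continuous_const.mul (huc.norm.pow 2)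
        exact hc.integrable_of_hasCompactSupport hcs.mul_left)
      (Eventually.of_forall fun x => ?_)
    show ‖(c x : ℂ) * u x‖ ^ 2 ≤ M ^ 2 * ‖u x‖ ^ 2
    have hx : ‖(c x : ℂ) * u x‖ = |c x| * ‖u x‖ := by
      rw [norm_mul, Complex.norm_real, Real.norm_eq_abs]
    rw [hx, mul_pow]
    gcongr
    exact hc x
  have h2 : (∫ x : ℝ, M ^ 2 * ‖u x‖ ^ 2) = M ^ 2 := by
    rw [integral_const_mul, hu1, mul_one]
  calc J (fun x => (c x : ℂ) * u x) ≤ Real.sqrt (M ^ 2) :=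
        Real.sqrt_le_sqrt (by rw [h2] at hmono; exact hmono)
    _ = M := Real.sqrt_sq hM

lemma continuous_deriv2 {u : ℝ → ℂ} (hu : ContDiff ℝ 2 u) :
    Continuous (deriv (deriv u)) := by
  have h1 : ContDiff ℝ (1 + 1 : WithTop ℕ∞) u := by
    rwa [show (1 + 1 : WithTop ℕ∞) = 2 by norm_num]
  exact ((contDiff_succ_iff_deriv.mp h1).2.2).continuous_deriv le_rfl

lemma resid_continuous {W : ℝ → ℝ} (hW : Continuous W) (E : ℝ) {u : ℝ → ℂ}
    (hu : ContDiff ℝ 2 u) : Continuous (resid W E u) := by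
  refine ((continuous_deriv2 hu).neg.add
    ((Complex.continuous_ofReal.comp hW).mul hu.continuous)).sub
    (continuous_const.mul hu.continuous)

lemma resid_support {W : ℝ → ℝ} (E : ℝ) {u : ℝ → ℂ}
    (hus : HasCompactSupport u) : HasCompactSupport (resid W E u) := by
  have h2 : HasCompactSupport (fun x => -deriv (deriv u) x) :=
    (hus.deriv.deriv).comp_left (g := Neg.neg) neg_zero
  have hWu : HasCompactSupport (fun x => (W x : ℂ) * u x) := hus.mul_left
  have hEu : HasCompactSupport (fun x => (E : ℂ) * u x) := hus.mul_left
  have ha : HasCompactSupport (fun x => -deriv (deriv u) x + (W x : ℂ) * u x) :=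
    h2.add hWu
  exact ha.comp₂_left hEu (sub_zero 0)

/-- The `η`-relaxed approximate point spectrum. -/
def Aset (W : ℝ → ℝ) (η : ℝ) : Set ℝ :=
  {E : ℝ | ∀ ε : ℝ, 0 < ε → ∃ u : ℝ → ℂ, ContDiff ℝ 2 u ∧ HasCompactSupport u ∧
    (∫ x : ℝ, ‖u x‖ ^ 2) = 1 ∧ J (resid W E u) < η + ε}

lemma spectrum_eq (W : ℝ → ℝ) :
    schrodingerSpectrum W =
      {E : ℝ | ∀ ε : ℝ, 0 < ε → ∃ u : ℝ → ℂ, ContDiff ℝ 2 u ∧ HasCompactSupport u ∧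
        (∫ x : ℝ, ‖u x‖ ^ 2) = 1 ∧ (∫ x : ℝ, ‖resid W E u x‖ ^ 2) < ε} := rfl

lemma spectrum_subset_Aset_self (W : ℝ → ℝ) : schrodingerSpectrum W ⊆ Aset W 0 := by
  intro E hE ε hε
  obtain ⟨u, hu1, hu2, hu3, hu4⟩ := hE (ε ^ 2) (by positivity)
  refine ⟨u, hu1, hu2, hu3, ?_⟩
  rw [zero_add]
  calc J (resid W E u) < Real.sqrt (ε ^ 2) :=
        Real.sqrt_lt_sqrt (integral_sq_nonneg _) hu4
    _ = ε := Real.sqrt_sq hε.le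

lemma Aset_mono (W : ℝ → ℝ) {η₁ η₂ : ℝ} (h : η₁ ≤ η₂) : Aset W η₁ ⊆ Aset W η₂ := by
  intro E hE ε hε
  obtain ⟨u, hu1, hu2, hu3, hu4⟩ := hE ε hε
  exact ⟨u, hu1, hu2, hu3, hu4.trans_le (by linarith)⟩

lemma iInter_Aset_subset (W : ℝ → ℝ) :
    (⋂ n : ℕ, Aset W (1 / (n + 1))) ⊆ schrodingerSpectrum W := by
  intro E hE ε hε
  set t := Real.sqrt ε with ht
  have htpos : 0 < t := Real.sqrt_pos.mpr hε
  obtain ⟨n, hn⟩ := exists_nat_one_div_lt (half_pos htpos)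
  have hEn := (Set.mem_iInter.mp hE n) (t / 2) (half_pos htpos)
  obtain ⟨u, hu1, hu2, hu3, hu4⟩ := hEn
  refine ⟨u, hu1, hu2, hu3, ?_⟩
  have hJ : J (resid W E u) < t := by
    have : (1 : ℝ) / (n + 1) < t / 2 := by exact_mod_cast hn
    linarith
  have := pow_lt_pow_left₀ hJ (J_nonneg _) (by norm_num : 2 ≠ 0)
  rw [sq_J] at this
  calc (∫ x : ℝ, ‖resid W E u x‖ ^ 2) < t ^ 2 := this
    _ = ε := Real.sq_sqrt hε.le

lemma isClosed_Aset {W : ℝ → ℝ} (hW : Continuous W) {η : ℝ} (hη : 0 ≤ η) :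
    IsClosed (Aset W η) := by
  refine isClosed_of_closure_subset ?_
  intro E' hE' ε hε
  obtain ⟨E, hE, hdist⟩ := Metric.mem_closure_iff.mp hE' (ε / 2) (half_pos hε)
  obtain ⟨u, hu1, hu2, hu3, hu4⟩ := hE (ε / 2) (half_pos hε)
  refine ⟨u, hu1, hu2, hu3, ?_⟩
  have hkey : ∀ x, resid W E' u x = resid W E u x + (((E - E' : ℝ) : ℂ) * u x) := by
    intro x
    simp only [resid]
    push_cast
    ring
  have hfun : resid W E' u = fun x => resid W E u x + ((E - E' : ℝ) : ℂ) * u x :=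
    funext hkey
  have hJle : J (resid W E' u) ≤ J (resid W E u) + J (fun x => ((E - E' : ℝ) : ℂ) * u x) := by
    rw [hfun]
    exact J_add_le (resid W E u) (fun x => ((E - E' : ℝ) : ℂ) * u x)
      (resid_continuous hW E hu1) (resid_support E hu2)
      (continuous_const.mul hu1.continuous) hu2.mul_left
  have hscale : J (fun x => ((E - E' : ℝ) : ℂ) * u x) ≤ ε / 2 := by
    refine J_scaled_le u hu1.continuous hu2 hu3 (fun _ => E - E') (ε / 2) (half_pos hε).le
      (fun x => ?_)
    have : dist E' E = |E - E'| := by rw [dist_comm, Real.dist_eq]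
    linarith [this ▸ hdist.le]
  linarith

lemma spectrum_subset_Aset {W W' : ℝ → ℝ} (hW : Continuous W) (hW' : Continuous W')
    {η : ℝ} (hη : 0 ≤ η) (hd : ∀ x, |W x - W' x| ≤ η) :
    schrodingerSpectrum W' ⊆ Aset W η := by
  intro E hE ε hε
  obtain ⟨u, hu1, hu2, hu3, hu4⟩ := hE (ε ^ 2) (by positivity)
  refine ⟨u, hu1, hu2, hu3, ?_⟩
  have hkey : ∀ x, resid W E u x = resid W' E u x + (((W x - W' x : ℝ) : ℂ) * u x) := by
    intro x
    simp only [resid]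
    push_cast
    ring
  have hfun : resid W E u = fun x => resid W' E u x + ((W x - W' x : ℝ) : ℂ) * u x :=
    funext hkey
  have hJle : J (resid W E u) ≤ J (resid W' E u)
      + J (fun x => ((W x - W' x : ℝ) : ℂ) * u x) := by
    rw [hfun]
    exact J_add_le (resid W' E u) (fun x => ((W x - W' x : ℝ) : ℂ) * u x)
      (resid_continuous hW' E hu1) (resid_support E hu2)
      (((Complex.continuous_ofReal.comp (hW.sub hW')).mul hu1.continuous)) hu2.mul_left
  have hscale : J (fun x => ((W x - W' x : ℝ) : ℂ) * u x) ≤ η :=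
    J_scaled_le u hu1.continuous hu2 hu3 _ η hη hd
  have hres : J (resid W' E u) < ε := by
    calc J (resid W' E u) < Real.sqrt (ε ^ 2) :=
          Real.sqrt_lt_sqrt (integral_sq_nonneg _) hu4
      _ = ε := Real.sqrt_sq hε.le
  linarith

end SmallSpecAux

open SmallSpecAux

/-- Let `R, δ > 0`, `Λ > 1`, `λ ∈ [Λ⁻¹, Λ]`, and `V ∈ LP` with
`Leb(σ(H_{λV}) ∩ [-R,R]) < δ`. Then there are `τ, r > 0` such that
`Leb(σ(H_{λ'V'}) ∩ [-R,R]) < δ` whenever `λ' ∈ [Λ⁻¹, Λ]` with `|λ - λ'| < τ` and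
`V' ∈ LP` with `‖V - V'‖_∞ < r`. -/
theorem small_spectrum_is_stable
    (R δ Λ lam : ℝ) (hR : 0 < R) (hδ : 0 < δ) (hΛ : 1 < Λ) (hlam : lam ∈ Set.Icc Λ⁻¹ Λ)
    (V : ℝ →ᵇ ℝ) (hV : V ∈ LP)
    (hsmall : volume (schrodingerSpectrum (fun x => lam * V x) ∩ Set.Icc (-R) R)
      < ENNReal.ofReal δ) :
    ∃ τ : ℝ, 0 < τ ∧ ∃ r : ℝ, 0 < r ∧
      ∀ lam' ∈ Set.Icc Λ⁻¹ Λ, |lam - lam'| < τ →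
        ∀ V' : ℝ →ᵇ ℝ, V' ∈ LP → ‖V - V'‖ < r →
          volume (schrodingerSpectrum (fun x => lam' * V' x) ∩ Set.Icc (-R) R)
            < ENNReal.ofReal δ := by
  set W : ℝ → ℝ := fun x => lam * V x with hWdef
  have hWc : Continuous W := continuous_const.mul V.continuous
  set s : ℕ → Set ℝ := fun n => Aset W (1 / ((n : ℝ) + 1)) ∩ Set.Icc (-R) R with hsdef
  have hmeas : ∀ n, NullMeasurableSet (s n) volume := fun n =>
    (((isClosed_Aset hWc (by positivity)).measurableSet).inter measurableSet_Icc).nullMeasurableSet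
  have hanti : Antitone s := by
    intro n m hnm
    refine Set.inter_subset_inter_left _ (Aset_mono W ?_)
    have h1 : (0 : ℝ) < (n : ℝ) + 1 := by positivity
    have h2 : ((n : ℝ) + 1) ≤ (m : ℝ) + 1 := by exact_mod_cast Nat.succ_le_succ hnm
    exact one_div_le_one_div_of_le h1 h2
  have hfin : ∃ n, volume (s n) ≠ ∞ :=
    ⟨0, ((measure_mono Set.inter_subset_right).trans_lt measure_Icc_lt_top).ne⟩
  have htend := tendsto_measure_iInter_atTop hmeas hanti hfin
  have hsub : (⋂ n, s n) ⊆ schrodingerSpectrum W ∩ Set.Icc (-R) R := by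
    intro E hE
    refine ⟨iInter_Aset_subset W ?_, (Set.mem_iInter.mp hE 0).2⟩
    exact Set.mem_iInter.mpr fun n => (Set.mem_iInter.mp hE n).1
  have hlt : volume (⋂ n, s n) < ENNReal.ofReal δ :=
    (measure_mono hsub).trans_lt hsmall
  obtain ⟨n, hn⟩ := (htend.eventually_lt_const hlt).exists
  set η : ℝ := 1 / ((n : ℝ) + 1) with hηdef
  have hη : 0 < η := by positivity
  have hVpos : (0 : ℝ) < ‖V‖ + 1 := by positivity
  refine ⟨η / (2 * (‖V‖ + 1)), by positivity, η / (2 * Λ), by positivity, ?_⟩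
  intro lam' hlam' hτ V' hV' hr
  set W' : ℝ → ℝ := fun x => lam' * V' x with hW'def
  have hW'c : Continuous W' := continuous_const.mul V'.continuous
  have hd : ∀ x, |W x - W' x| ≤ η := by
    intro x
    have hid : W x - W' x = (lam - lam') * V x + lam' * (V x - V' x) := by
      simp only [hWdef, hW'def]; ring
    have hVx : |V x| ≤ ‖V‖ := by
      have := V.norm_coe_le_norm x
      rwa [Real.norm_eq_abs] at this
    have hVVx : |V x - V' x| ≤ ‖V - V'‖ := by
      have := (V - V').norm_coe_le_norm x
      rwa [BoundedContinuousFunction.coe_sub, Pi.sub_apply, Real.norm_eq_abs] at this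
    have hlam'Λ : |lam'| ≤ Λ := by
      have h0 : (0 : ℝ) < Λ⁻¹ := by positivity
      rw [abs_of_nonneg (le_trans h0.le hlam'.1)]
      exact hlam'.2
    have h1 : |lam - lam'| * |V x| ≤ (η / (2 * (‖V‖ + 1))) * (‖V‖ + 1) :=
      mul_le_mul hτ.le (hVx.trans (by linarith)) (abs_nonneg _) (by positivity)
    have h1' : (η / (2 * (‖V‖ + 1))) * (‖V‖ + 1) = η / 2 := by
      field_simp
    have h2 : |lam'| * |V x - V' x| ≤ Λ * (η / (2 * Λ)) :=
      mul_le_mul hlam'Λ (hVVx.trans hr.le) (abs_nonneg _) (by positivity)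
    have h2' : Λ * (η / (2 * Λ)) = η / 2 := by
      field_simp
    calc |W x - W' x| ≤ |lam - lam'| * |V x| + |lam'| * |V x - V' x| := by
          rw [hid]; exact (abs_add_le _ _).trans (by rw [abs_mul, abs_mul])
      _ ≤ η / 2 + η / 2 := add_le_add (h1'.symm ▸ h1) (h2'.symm ▸ h2)
      _ = η := by ring
  have hspec : schrodingerSpectrum W' ⊆ Aset W η :=
    spectrum_subset_Aset hWc hW'c hη.le hd
  have hfinal : schrodingerSpectrum W' ∩ Set.Icc (-R) R ⊆ s n :=
    Set.inter_subset_inter_left _ hspec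
  exact (measure_mono hfinal).trans_lt hn
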